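/- For all positive integers k ≥ 2 and n ≥ k, there exists a group fair division instance with k groups and n agents in total (with all item utilities in [0,1]) such that for every real c < √(n−1)/16, no allocation is a consensus 1/k-division up to c goods. Consequently, c^CD_k(n) ≥ √(n−1)/16 = Ω(√n). -/

import Mathlib

open Finset

/-- The bundle of group `i` under the allocation `χ : [m] → [k]`. -/
def bundle {k m : ℕ} (χ : Fin m → Fin k) (i : Fin k) : Finset (Fin m) :=
  Finset.univ.filter (fun g => χ g = i)

/-- An allocation `χ` is a consensus `1/k`-division up to `c` goods (CD_k`c`): for all
`i, i' ∈ [k]` and every agent `a` (the `j`-th agent of any group `ig`), there exists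
`B ⊆ G` with `|B| ≤ c` such that `u_a(A_i) ≥ u_a(A_{i'} \ B)`. -/
def IsCD {k m : ℕ} (ns : Fin k → ℕ) (u : ∀ i : Fin k, Fin (ns i) → Fin m → ℝ)
    (χ : Fin m → Fin k) (c : ℝ) : Prop :=
  ∀ (i i' : Fin k) (ig : Fin k) (j : Fin (ns ig)), ∃ B : Finset (Fin m),
    (B.card : ℝ) ≤ c ∧
    ∑ g ∈ bundle χ i, u ig j g ≥ ∑ g ∈ bundle χ i' \ B, u ig j g

namespace CDLB

noncomputable section

variable {t : ℕ}

/-- Walsh character. -/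
def Had (x y : Fin t → Bool) : ℝ := ∏ i, (if x i && y i then -1 else 1)

lemma had_comm (x y : Fin t → Bool) : Had x y = Had y x :=
  Finset.prod_congr rfl (by intro i _; rw [Bool.and_comm])

lemma had_eq_pow (x y : Fin t → Bool) :
    Had x y = (-1 : ℝ) ^ (univ.filter (fun i => x i && y i)).card := by
  rw [Had, ← Finset.prod_filter_mul_prod_filter_not univ (fun i => x i && y i)]
  rw [Finset.prod_congr rfl (fun i hi => if_pos (Finset.mem_filter.mp hi).2)]
  rw [Finset.prod_congr rfl (fun i hi => if_neg (by simpa using (Finset.mem_filter.mp hi).2))]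
  simp [Finset.prod_const]

lemma had_sq (x y : Fin t → Bool) : Had x y * Had x y = 1 := by
  rw [had_eq_pow, ← pow_add]
  exact Even.neg_one_pow ⟨_, rfl⟩

lemma abs_had (x y : Fin t → Bool) : |Had x y| = 1 := by
  rw [had_eq_pow, abs_pow, abs_neg, abs_one, one_pow]

lemma had_le_one (x y : Fin t → Bool) : Had x y ≤ 1 :=
  le_of_abs_le (le_of_eq (abs_had x y))

lemma neg_one_le_had (x y : Fin t → Bool) : -1 ≤ Had x y :=
  neg_le_of_abs_le (le_of_eq (abs_had x y))

lemma had_false_right (x : Fin t → Bool) : Had x (fun _ => false) = 1 := by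
  unfold Had; simp

/-- Effect on `Had x ·` of flipping coordinate `i₀` of `w`. -/
lemma had_update (x w : Fin t → Bool) (i₀ : Fin t) :
    Had x (Function.update w i₀ (!w i₀)) = (if x i₀ then -1 else 1) * Had x w := by
  unfold Had
  rw [← Finset.mul_prod_erase univ _ (Finset.mem_univ i₀),
      ← Finset.mul_prod_erase univ (fun i => (if x i && w i then (-1:ℝ) else 1)) (Finset.mem_univ i₀)]
  have herase : ∀ i ∈ univ.erase i₀,
      (if x i && (Function.update w i₀ (!w i₀)) i then (-1:ℝ) else 1)
      = (if x i && w i then (-1:ℝ) else 1) := by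
    intro i hi
    rw [Function.update_of_ne (Finset.mem_erase.mp hi).1]
  rw [Finset.prod_congr rfl herase]
  rw [Function.update_self]
  cases hx : x i₀ <;> cases hw : w i₀ <;> simp

/-- The flip involution. -/
def flipP (i₀ : Fin t) : Equiv.Perm (Fin t → Bool) :=
  Function.Involutive.toPerm (fun w => Function.update w i₀ (!w i₀)) (by
    intro w
    ext i
    by_cases h : i = i₀
    · subst h; simp
    · simp [Function.update_of_ne h])

lemma flipP_apply (i₀ : Fin t) (w : Fin t → Bool) :
    flipP i₀ w = Function.update w i₀ (!w i₀) := rfl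

/-- Row sums of the character vanish off the trivial character. -/
lemma sum_had_eq_zero {x : Fin t → Bool} (hx : x ≠ fun _ => false) :
    ∑ y : Fin t → Bool, Had x y = 0 := by
  obtain ⟨i₀, hi₀⟩ : ∃ i, x i = true := by
    by_contra h
    push_neg at h
    exact hx (funext fun i => by simpa using h i)
  have h1 : ∑ y : Fin t → Bool, Had x (flipP i₀ y) = ∑ y : Fin t → Bool, Had x y :=
    Equiv.sum_comp (flipP i₀) (fun y => Had x y)
  have h2 : ∀ y : Fin t → Bool, Had x (flipP i₀ y) = - Had x y := by
    intro y
    rw [flipP_apply, had_update, hi₀]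
    simp
  rw [Finset.sum_congr rfl (fun y _ => h2 y), Finset.sum_neg_distrib] at h1
  linarith

/-- Orthogonality of distinct characters. -/
lemma sum_had_mul_had {x x' : Fin t → Bool} (hxx : x ≠ x') :
    ∑ y : Fin t → Bool, Had x y * Had x' y = 0 := by
  obtain ⟨i₀, hi₀⟩ : ∃ i, x i ≠ x' i := by
    by_contra h
    push_neg at h
    exact hxx (funext h)
  have h1 : ∑ y : Fin t → Bool, Had x (flipP i₀ y) * Had x' (flipP i₀ y)
      = ∑ y : Fin t → Bool, Had x y * Had x' y :=
    Equiv.sum_comp (flipP i₀) (fun y => Had x y * Had x' y)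
  have h2 : ∀ y : Fin t → Bool, Had x (flipP i₀ y) * Had x' (flipP i₀ y)
      = - (Had x y * Had x' y) := by
    intro y
    rw [flipP_apply, had_update, had_update]
    cases hx : x i₀ <;> cases hx' : x' i₀ <;> simp_all <;> ring
  rw [Finset.sum_congr rfl (fun y _ => h2 y), Finset.sum_neg_distrib] at h1
  linarith

/-- Parseval. -/
lemma parseval (δ : (Fin t → Bool) → ℝ) :
    ∑ w : Fin t → Bool, (∑ x : Fin t → Bool, δ x * Had x w) ^ 2
      = (2 : ℝ) ^ t * ∑ x : Fin t → Bool, (δ x) ^ 2 := by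
  have hcard : (Fintype.card (Fin t → Bool) : ℝ) = 2 ^ t := by
    simp [Fintype.card_fun]
  calc ∑ w : Fin t → Bool, (∑ x : Fin t → Bool, δ x * Had x w) ^ 2
      = ∑ w : Fin t → Bool, ∑ x : Fin t → Bool, ∑ x' : Fin t → Bool,
          (δ x * δ x') * (Had x w * Had x' w) := by
        refine Finset.sum_congr rfl (fun w _ => ?_)
        rw [sq, Finset.sum_mul_sum]
        exact Finset.sum_congr rfl (fun x _ => Finset.sum_congr rfl (fun x' _ => by ring))
    _ = ∑ x : Fin t → Bool, ∑ x' : Fin t → Bool, (δ x * δ x') *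
          ∑ w : Fin t → Bool, Had x w * Had x' w := by
        rw [Finset.sum_comm]
        refine Finset.sum_congr rfl (fun x _ => ?_)
        rw [Finset.sum_comm]
        refine Finset.sum_congr rfl (fun x' _ => ?_)
        rw [Finset.mul_sum]
    _ = ∑ x : Fin t → Bool, (δ x * δ x) * ∑ w : Fin t → Bool, Had x w * Had x w := by
        refine Finset.sum_congr rfl (fun x _ => ?_)
        rw [Finset.sum_eq_single x]
        · intro x' _ hne
          rw [sum_had_mul_had (Ne.symm hne), mul_zero]
        · intro h; exact absurd (Finset.mem_univ x) h
    _ = (2:ℝ) ^ t * ∑ x : Fin t → Bool, (δ x) ^ 2 := by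
        rw [Finset.mul_sum]
        refine Finset.sum_congr rfl (fun x _ => ?_)
        rw [Finset.sum_congr rfl (fun w _ => had_sq x w), Finset.sum_const]
        simp only [nsmul_eq_mul, mul_one, Finset.card_univ]
        rw [hcard]
        ring

/-- number of bits -/
def tt (n : ℕ) : ℕ := Nat.log 2 n
/-- number of types: largest power of two `≤ n` -/
def NN (n : ℕ) : ℕ := 2 ^ tt n
/-- multiplicity of each type -/
def μμ (k : ℕ) : ℕ := k / 2
/-- number of items -/
def mm (k n : ℕ) : ℕ := NN n * μμ k

lemma hcardX (n : ℕ) : Fintype.card (Fin (tt n) → Bool) = NN n := by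
  simp [NN, Fintype.card_fun]

def eX (n : ℕ) : (Fin (tt n) → Bool) ≃ Fin (NN n) := Fintype.equivFinOfCardEq (hcardX n)

def eItem (k n : ℕ) : Fin (mm k n) ≃ (Fin (tt n) → Bool) × Fin (μμ k) :=
  (finProdFinEquiv.symm).trans (Equiv.prodCongr (eX n).symm (Equiv.refl _))

/-- the type of an item -/
def typ (k n : ℕ) (g : Fin (mm k n)) : Fin (tt n) → Bool := (eItem k n g).1

/-- the character of an agent -/
def xa (n : ℕ) (a : Fin n) : Fin (tt n) → Bool :=
  if h : (a : ℕ) < NN n then (eX n).symm ⟨a.1, h⟩ else fun _ => false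

/-- the utility of agent `a` for item `g` -/
def UU (k n : ℕ) (a : Fin n) (g : Fin (mm k n)) : ℝ :=
  (1 + Had (typ k n g) (xa n a)) / 2

lemma NN_le (n : ℕ) (hn : n ≠ 0) : NN n ≤ n := Nat.pow_log_le_self 2 hn

lemma lt_two_NN (n : ℕ) : n < 2 * NN n := by
  have h := Nat.lt_pow_succ_log_self (by norm_num : 1 < 2) n
  rw [pow_succ] at h
  rw [NN, tt]
  omega

lemma NN_pos (n : ℕ) : 0 < NN n := Nat.pow_pos (by norm_num)

/-- each character is realized by some agent -/
lemma exists_agent (n : ℕ) (hn : n ≠ 0) (w : Fin (tt n) → Bool) :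
    ∃ a : Fin n, xa n a = w := by
  refine ⟨⟨((eX n) w).1, lt_of_lt_of_le ((eX n) w).2 (NN_le n hn)⟩, ?_⟩
  have h : (((eX n) w).1 : ℕ) < NN n := ((eX n) w).2
  rw [xa, dif_pos h]
  have : (⟨((eX n) w).1, h⟩ : Fin (NN n)) = (eX n) w := rfl
  rw [this, Equiv.symm_apply_apply]

/-- summing a function of the type over all items -/
lemma itemsum (k n : ℕ) (f : (Fin (tt n) → Bool) → ℝ) :
    ∑ g : Fin (mm k n), f (typ k n g) = (μμ k : ℝ) * ∑ x : Fin (tt n) → Bool, f x := by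
  have h1 : ∑ g : Fin (mm k n), f (typ k n g)
      = ∑ p : (Fin (tt n) → Bool) × Fin (μμ k), f p.1 :=
    Equiv.sum_comp (eItem k n) (fun p => f p.1)
  rw [h1, Fintype.sum_prod_type]
  simp only [Finset.sum_const, nsmul_eq_mul, Finset.card_univ, Fintype.card_fin]
  rw [Finset.mul_sum]

/-- mean bound. -/
lemma mean_bound {k : ℕ} (hk : 0 < k) (v : Fin k → ℝ) (c tot : ℝ)
    (hsum : ∑ i, v i = tot) (hpair : ∀ i i', |v i - v i'| ≤ c) (i : Fin k) :
    |v i - tot / k| ≤ c := by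
  have h1 : ∑ i' : Fin k, (v i - v i') = k * v i - tot := by
    rw [Finset.sum_sub_distrib, hsum, Finset.sum_const]
    simp [nsmul_eq_mul]
  have h2 : |(k : ℝ) * v i - tot| ≤ k * c := by
    rw [← h1]
    refine le_trans (Finset.abs_sum_le_sum_abs _ _) ?_
    calc ∑ i' : Fin k, |v i - v i'| ≤ ∑ _i' : Fin k, c :=
          Finset.sum_le_sum fun i' _ => hpair i i'
      _ = k * c := by simp [Finset.sum_const, nsmul_eq_mul]
  have hkR : (0 : ℝ) < k := by exact_mod_cast hk
  have h3 : v i - tot / k = ((k : ℝ) * v i - tot) / k := by field_simp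
  rw [h3, abs_div, abs_of_pos hkR, div_le_iff₀ hkR]
  calc |(k:ℝ) * v i - tot| ≤ k * c := h2
    _ = c * k := by ring


set_option maxHeartbeats 1000000 in
/-- Core lemma: if all pairwise bundle gaps are at most `c` for all agents, then
`c ≥ √(n-1)/16`. -/
theorem core (k n : ℕ) (hk : 2 ≤ k) (hn : k ≤ n) (c : ℝ) (hc0 : 0 ≤ c)
    (χ : Fin (mm k n) → Fin k)
    (hflat : ∀ (a : Fin n) (i i' : Fin k),
      |(∑ g ∈ bundle χ i, UU k n a g) - ∑ g ∈ bundle χ i', UU k n a g| ≤ c) :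
    Real.sqrt ((n : ℝ) - 1) / 16 ≤ c := by
  classical
  haveI : NeZero k := ⟨by omega⟩
  have hn0 : n ≠ 0 := by omega
  have hkpos : 0 < k := by omega
  have hkR : (0 : ℝ) < k := by exact_mod_cast hkpos
  have hNR : (0 : ℝ) < (NN n : ℝ) := by exact_mod_cast NN_pos n
  -- decomposition of bundle values
  have Sdecomp : ∀ (a : Fin n) (i : Fin k),
      ∑ g ∈ bundle χ i, UU k n a g
        = (((bundle χ i).card : ℝ) + ∑ g ∈ bundle χ i, Had (typ k n g) (xa n a)) / 2 := by
    intro a i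
    unfold UU
    rw [← Finset.sum_div, Finset.sum_add_distrib, Finset.sum_const, nsmul_eq_mul, mul_one]
  -- the all-ones agent
  obtain ⟨a₀, ha₀⟩ := exists_agent n hn0 (fun _ => false)
  have hS0 : ∀ i : Fin k, ∑ g ∈ bundle χ i, UU k n a₀ g = ((bundle χ i).card : ℝ) := by
    intro i
    rw [Sdecomp a₀ i, ha₀]
    rw [Finset.sum_congr rfl (fun g _ => had_false_right (typ k n g)), Finset.sum_const,
      nsmul_eq_mul, mul_one]
    ring
  -- pairwise size bounds
  have hspair : ∀ i i' : Fin k,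
      |((bundle χ i).card : ℝ) - ((bundle χ i').card : ℝ)| ≤ c := by
    intro i i'
    have := hflat a₀ i i'
    rwa [hS0 i, hS0 i'] at this
  -- total size
  have hssum : ∑ i : Fin k, ((bundle χ i).card : ℝ) = (mm k n : ℝ) := by
    have h := Finset.card_eq_sum_card_fiberwise
      (f := χ) (s := (univ : Finset (Fin (mm k n)))) (t := univ) (fun x _ => Finset.mem_univ _)
    have h2 : (univ : Finset (Fin (mm k n))).card = ∑ i : Fin k, (bundle χ i).card := h
    rw [Finset.card_univ, Fintype.card_fin] at h2
    exact_mod_cast h2.symm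
  -- size flatness
  have hsize : ∀ i : Fin k, |((bundle χ i).card : ℝ) - (mm k n : ℝ) / k| ≤ c :=
    fun i => mean_bound hkpos _ c _ hssum hspair i
  -- character sums over all bundles vanish
  have hHsumne : ∀ w : Fin (tt n) → Bool, w ≠ (fun _ => false) →
      ∑ x : Fin (tt n) → Bool, Had x w = 0 := by
    intro w hw
    rw [Finset.sum_congr rfl (fun x _ => had_comm x w)]
    exact sum_had_eq_zero hw
  have hZsum : ∀ w : Fin (tt n) → Bool, w ≠ (fun _ => false) →
      ∑ i : Fin k, ∑ g ∈ bundle χ i, Had (typ k n g) w = 0 := by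
    intro w hw
    have h1 : ∑ i : Fin k, ∑ g ∈ bundle χ i, Had (typ k n g) w
        = ∑ g : Fin (mm k n), Had (typ k n g) w :=
      Finset.sum_fiberwise_of_maps_to (fun g _ => Finset.mem_univ (χ g)) _
    rw [h1, itemsum k n (fun x => Had x w), hHsumne w hw, mul_zero]
  -- flatness of character sums
  have hZflat : ∀ w : Fin (tt n) → Bool, w ≠ (fun _ => false) → ∀ i : Fin k,
      |∑ g ∈ bundle χ i, Had (typ k n g) w| ≤ 3 * c := by
    intro w hw i
    obtain ⟨aw, haw⟩ := exists_agent n hn0 w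
    have hrepr : ∀ i' : Fin k, ∑ g ∈ bundle χ i', Had (typ k n g) w
        = 2 * (∑ g ∈ bundle χ i', UU k n aw g) - ((bundle χ i').card : ℝ) := by
      intro i'
      rw [Sdecomp aw i', haw]
      ring
    have hpair : ∀ i1 i2 : Fin k,
        |(∑ g ∈ bundle χ i1, Had (typ k n g) w) - ∑ g ∈ bundle χ i2, Had (typ k n g) w|
          ≤ 3 * c := by
      intro i1 i2
      rw [hrepr i1, hrepr i2]
      have h1 := hflat aw i1 i2
      have h2 := hspair i1 i2
      rw [abs_le] at h1 h2 ⊢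
      constructor <;> [linarith [h1.1, h2.2]; linarith [h1.2, h2.1]]
    have := mean_bound hkpos (fun i => ∑ g ∈ bundle χ i, Had (typ k n g) w)
      (3 * c) 0 (hZsum w hw) hpair i
    simpa using this
  -- type counts of bundle 0
  set cnt : (Fin (tt n) → Bool) → ℕ :=
    fun x => ((bundle χ 0).filter (fun g => typ k n g = x)).card with hcnt
  have hs0cnt : ((bundle χ 0).card : ℝ) = ∑ x : Fin (tt n) → Bool, (cnt x : ℝ) := by
    have h := Finset.card_eq_sum_card_fiberwise
      (f := typ k n) (s := bundle χ 0) (t := univ) (fun g _ => Finset.mem_univ _)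
    exact_mod_cast congrArg (fun z : ℕ => (z : ℝ)) h
  have hZ0cnt : ∀ w : Fin (tt n) → Bool,
      ∑ g ∈ bundle χ 0, Had (typ k n g) w
        = ∑ x : Fin (tt n) → Bool, (cnt x : ℝ) * Had x w := by
    intro w
    have h1 : ∑ x : Fin (tt n) → Bool, ∑ g ∈ (bundle χ 0).filter (fun g => typ k n g = x),
        Had (typ k n g) w = ∑ g ∈ bundle χ 0, Had (typ k n g) w :=
      Finset.sum_fiberwise_of_maps_to (fun g _ => Finset.mem_univ (typ k n g)) _
    rw [← h1]
    refine Finset.sum_congr rfl (fun x _ => ?_)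
    rw [Finset.sum_congr rfl (fun g hg => by
      rw [(Finset.mem_filter.mp hg).2])]
    rw [Finset.sum_const, nsmul_eq_mul]
  -- the deviation α
  set α : ℝ := (μμ k : ℝ) / k with hα
  have hα0 : 0 ≤ α := by positivity
  have hμk3 : k ≤ 3 * μμ k := by unfold μμ; omega
  have hμk2 : 2 * μμ k ≤ k := by unfold μμ; omega
  have hα13 : 1 / 3 ≤ α := by
    rw [hα, le_div_iff₀ hkR]
    have : (k : ℝ) ≤ 3 * (μμ k : ℝ) := by exact_mod_cast hμk3
    linarith
  have hα12 : α ≤ 1 / 2 := by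
    rw [hα, div_le_iff₀ hkR]
    have : 2 * (μμ k : ℝ) ≤ (k : ℝ) := by exact_mod_cast hμk2
    linarith
  -- the deviation vector
  have hDvRepr : ∀ w : Fin (tt n) → Bool,
      ∑ x : Fin (tt n) → Bool, ((cnt x : ℝ) - α) * Had x w
        = (∑ g ∈ bundle χ 0, Had (typ k n g) w) - α * ∑ x : Fin (tt n) → Bool, Had x w := by
    intro w
    rw [Finset.sum_congr rfl (fun x _ => sub_mul ((cnt x : ℝ)) α (Had x w)),
      Finset.sum_sub_distrib, ← Finset.mul_sum, hZ0cnt w]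
  -- bound at the trivial character
  have hHsum0 : ∑ x : Fin (tt n) → Bool, Had x (fun _ => false) = (NN n : ℝ) := by
    rw [Finset.sum_congr rfl (fun x _ => had_false_right x), Finset.sum_const, nsmul_eq_mul,
      mul_one, Finset.card_univ, hcardX n]
  have hDv0 : |∑ x : Fin (tt n) → Bool, ((cnt x : ℝ) - α) * Had x (fun _ => false)| ≤ c := by
    rw [hDvRepr, hHsum0]
    have hZ00 : ∑ g ∈ bundle χ 0, Had (typ k n g) (fun _ => false)
        = ((bundle χ 0).card : ℝ) := by
      rw [Finset.sum_congr rfl (fun g _ => had_false_right (typ k n g)), Finset.sum_const,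
        nsmul_eq_mul, mul_one]
    rw [hZ00]
    have hmk : α * (NN n : ℝ) = (mm k n : ℝ) / k := by
      rw [hα]
      have : (mm k n : ℝ) = (NN n : ℝ) * (μμ k : ℝ) := by
        unfold mm; push_cast; ring
      rw [this]; ring
    rw [hmk]
    exact hsize 0
  have hDvne : ∀ w : Fin (tt n) → Bool, w ≠ (fun _ => false) →
      |∑ x : Fin (tt n) → Bool, ((cnt x : ℝ) - α) * Had x w| ≤ 3 * c := by
    intro w hw
    rw [hDvRepr, hHsumne w hw, mul_zero, sub_zero]
    exact hZflat w hw 0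
  -- Parseval lower bound
  have hpars := parseval (t := tt n) (fun x => (cnt x : ℝ) - α)
  have h2t : ((2 : ℝ) ^ (tt n)) = (NN n : ℝ) := by
    unfold NN; push_cast; ring
  -- per-type deviation
  have habs : ∀ x : Fin (tt n) → Bool, α ≤ |(cnt x : ℝ) - α| := by
    intro x
    rcases Nat.eq_zero_or_pos (cnt x) with h | h
    · rw [h, Nat.cast_zero, zero_sub, abs_neg, abs_of_nonneg hα0]
    · have h1 : (1 : ℝ) ≤ (cnt x : ℝ) := by exact_mod_cast h
      have : α ≤ (cnt x : ℝ) - α := by linarith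
      exact this.trans (le_abs_self _)
  have hsqx : ∀ x : Fin (tt n) → Bool, α ^ 2 ≤ ((cnt x : ℝ) - α) ^ 2 := by
    intro x
    have h := mul_self_le_mul_self hα0 (habs x)
    rw [abs_mul_abs_self] at h
    calc α ^ 2 = α * α := sq α
      _ ≤ ((cnt x : ℝ) - α) * ((cnt x : ℝ) - α) := h
      _ = ((cnt x : ℝ) - α) ^ 2 := (sq _).symm
  have hLB : (NN n : ℝ) * ((NN n : ℝ) * α ^ 2)
      ≤ ∑ w : Fin (tt n) → Bool, (∑ x : Fin (tt n) → Bool, ((cnt x : ℝ) - α) * Had x w) ^ 2 := by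
    rw [hpars, h2t]
    have h1 : (NN n : ℝ) * α ^ 2 ≤ ∑ x : Fin (tt n) → Bool, ((cnt x : ℝ) - α) ^ 2 := by
      calc (NN n : ℝ) * α ^ 2 = ∑ _x : Fin (tt n) → Bool, α ^ 2 := by
            rw [Finset.sum_const, nsmul_eq_mul, Finset.card_univ, hcardX n]
        _ ≤ ∑ x : Fin (tt n) → Bool, ((cnt x : ℝ) - α) ^ 2 :=
            Finset.sum_le_sum (fun x _ => hsqx x)
    exact mul_le_mul_of_nonneg_left h1 (le_of_lt hNR)
  -- upper bound on the energy
  have hsqb : ∀ y b : ℝ, |y| ≤ b → y ^ 2 ≤ b ^ 2 := by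
    intro y b h
    nlinarith [sq_abs y, abs_nonneg y]
  have hUB : ∑ w : Fin (tt n) → Bool, (∑ x : Fin (tt n) → Bool, ((cnt x : ℝ) - α) * Had x w) ^ 2
      ≤ 9 * (NN n : ℝ) * c ^ 2 := by
    rw [← Finset.add_sum_erase univ
      (fun w => (∑ x : Fin (tt n) → Bool, ((cnt x : ℝ) - α) * Had x w) ^ 2)
      (Finset.mem_univ (fun _ => false : Fin (tt n) → Bool))]
    have h1 : (∑ x : Fin (tt n) → Bool, ((cnt x : ℝ) - α) * Had x (fun _ => false)) ^ 2
        ≤ c ^ 2 := hsqb _ _ hDv0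
    have h2 : ∑ w ∈ (univ : Finset (Fin (tt n) → Bool)).erase (fun _ => false),
        (∑ x : Fin (tt n) → Bool, ((cnt x : ℝ) - α) * Had x w) ^ 2
        ≤ ∑ _w ∈ (univ : Finset (Fin (tt n) → Bool)).erase (fun _ => false), (3 * c) ^ 2 := by
      refine Finset.sum_le_sum (fun w hw => ?_)
      exact hsqb _ _ (hDvne w (Finset.mem_erase.mp hw).1)
    have h3 : ∑ _w ∈ (univ : Finset (Fin (tt n) → Bool)).erase (fun _ => false), (3 * c) ^ 2
        = ((NN n : ℝ) - 1) * (9 * c ^ 2) := by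
      rw [Finset.sum_const, nsmul_eq_mul, Finset.card_erase_of_mem (Finset.mem_univ _),
        Finset.card_univ, hcardX n]
      have hN1 : 1 ≤ NN n := NN_pos n
      push_cast [Nat.cast_sub hN1]
      ring
    have hN1R : (1 : ℝ) ≤ (NN n : ℝ) := by exact_mod_cast NN_pos n
    nlinarith [h1, h2.trans (le_of_eq h3), sq_nonneg c]
  -- conclude
  have hmain : (NN n : ℝ) * α ^ 2 ≤ 9 * c ^ 2 := by
    have h := hLB.trans hUB
    have h2 : (NN n : ℝ) * ((NN n : ℝ) * α ^ 2) ≤ (NN n : ℝ) * (9 * c ^ 2) := by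
      calc (NN n : ℝ) * ((NN n : ℝ) * α ^ 2) ≤ 9 * (NN n : ℝ) * c ^ 2 := h
        _ = (NN n : ℝ) * (9 * c ^ 2) := by ring
    exact le_of_mul_le_mul_left h2 hNR
  have hc2 : (NN n : ℝ) / 81 ≤ c ^ 2 := by
    have h19 : (1 / 3 : ℝ) ^ 2 ≤ α ^ 2 := by nlinarith [hα13]
    have := mul_le_mul_of_nonneg_left h19 (le_of_lt hNR)
    nlinarith [hmain]
  have hnN : (n : ℝ) - 1 ≤ 2 * (NN n : ℝ) := by
    have h := lt_two_NN n
    have : (n : ℝ) < 2 * (NN n : ℝ) := by exact_mod_cast h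
    linarith
  have hn1 : (0 : ℝ) ≤ (n : ℝ) - 1 := by
    have : (1 : ℝ) ≤ (n : ℝ) := by exact_mod_cast (by omega : 1 ≤ n)
    linarith
  have h256 : (n : ℝ) - 1 ≤ (16 * c) ^ 2 := by nlinarith [hc2, hnN]
  have hfin : Real.sqrt ((n : ℝ) - 1) ≤ 16 * c := by
    calc Real.sqrt ((n : ℝ) - 1) ≤ Real.sqrt ((16 * c) ^ 2) := Real.sqrt_le_sqrt h256
      _ = 16 * c := Real.sqrt_sq (by positivity)
  linarith

/-- Utilities are in `[0,1]`. -/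
lemma UU_mem (k n : ℕ) (a : Fin n) (g : Fin (mm k n)) : UU k n a g ∈ Set.Icc (0 : ℝ) 1 := by
  rw [Set.mem_Icc]
  unfold UU
  constructor
  · linarith [neg_one_le_had (typ k n g) (xa n a)]
  · linarith [had_le_one (typ k n g) (xa n a)]

end

end CDLB


set_option maxHeartbeats 1000000 in
/-- For all positive integers `k ≥ 2` and `n ≥ k`, there exists a group
fair division instance with `k` groups and `n` agents in total (all item utilities in
`[0,1]`) such that for every real `c < √(n−1)/16`, no allocation is a consensus
`1/k`-division up to `c` goods.  Consequently `c^CD_k(n) ≥ √(n−1)/16 = Ω(√n)`. -/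
theorem cd_lower_bound (k n : ℕ) (hk : 2 ≤ k) (hn : k ≤ n) :
    ∃ (ns : Fin k → ℕ), (∑ i, ns i) = n ∧
      ∃ (m : ℕ) (u : ∀ i : Fin k, Fin (ns i) → Fin m → ℝ),
        (∀ i j g, u i j g ∈ Set.Icc (0 : ℝ) 1) ∧
        ∀ c : ℝ, c < Real.sqrt ((n : ℝ) - 1) / 16 →
          ∀ χ : Fin m → Fin k, ¬ IsCD ns u χ c := by
  classical
  haveI : NeZero k := ⟨by omega⟩
  have hn0 : 0 < n := by omega
  refine ⟨fun i => if i = 0 then n else 0, ?_, CDLB.mm k n,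
    fun i j g => CDLB.UU k n ⟨j.1, lt_of_lt_of_le j.2 (by dsimp only; split <;> omega)⟩ g,
    ?_, ?_⟩
  · simp
  · intro i j g
    exact CDLB.UU_mem k n _ g
  · intro c hc χ hCD
    -- `c` is nonnegative
    have hc0 : 0 ≤ c := by
      obtain ⟨B, hB1, -⟩ := hCD 0 0 0 ⟨0, by simpa using hn0⟩
      exact le_trans (by positivity) hB1
    -- all pairwise gaps are at most `c`
    have step : ∀ (a : Fin n) (i i' : Fin k),
        (∑ g ∈ bundle χ i', CDLB.UU k n a g) - c ≤ ∑ g ∈ bundle χ i, CDLB.UU k n a g := by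
      intro a i i'
      obtain ⟨B, hB1, hB2⟩ := hCD i i' 0 ⟨a.1, by simpa using a.2⟩
      have hB2' : ∑ g ∈ bundle χ i, CDLB.UU k n a g
          ≥ ∑ g ∈ bundle χ i' \ B, CDLB.UU k n a g := hB2
      have hsplit : (∑ g ∈ bundle χ i' ∩ B, CDLB.UU k n a g)
          + ∑ g ∈ bundle χ i' \ B, CDLB.UU k n a g = ∑ g ∈ bundle χ i', CDLB.UU k n a g :=
        Finset.sum_inter_add_sum_sdiff _ _ _
      have hinter : ∑ g ∈ bundle χ i' ∩ B, CDLB.UU k n a g ≤ c := by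
        calc ∑ g ∈ bundle χ i' ∩ B, CDLB.UU k n a g ≤ ∑ _g ∈ bundle χ i' ∩ B, (1 : ℝ) :=
              Finset.sum_le_sum (fun g _ => (CDLB.UU_mem k n a g).2)
          _ = ((bundle χ i' ∩ B).card : ℝ) := by simp
          _ ≤ (B.card : ℝ) := by
              exact_mod_cast Finset.card_le_card Finset.inter_subset_right
          _ ≤ c := hB1
      linarith
    have hflat : ∀ (a : Fin n) (i i' : Fin k),
        |(∑ g ∈ bundle χ i, CDLB.UU k n a g) - ∑ g ∈ bundle χ i', CDLB.UU k n a g| ≤ c := by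
      intro a i i'
      rw [abs_le]
      exact ⟨by linarith [step a i i'], by linarith [step a i' i]⟩
    have := CDLB.core k n hk hn c hc0 χ hflat
    linarith
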